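/- For Hermitian matrices X and Y of the same size, Tr[exp(X + Y)] ≤ Tr[exp(X) exp(Y)] (Golden–Thompson inequality). -/

import Mathlib

open Matrix
open ComplexOrder
open scoped Classical

/-- positive semidefinite square root (junk value `0` off the PSD matrices) -/
noncomputable def msqrt {n : Type*} [Fintype n] [DecidableEq n] (A : Matrix n n ℂ) :
    Matrix n n ℂ :=
  if h : A.PosSemidef then h.1.cfc Real.sqrt else 0

/-- matrix logarithm via the Hermitian functional calculus (junk value `0` otherwise) -/
noncomputable def mlog {n : Type*} [Fintype n] [DecidableEq n] (A : Matrix n n ℂ) :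
    Matrix n n ℂ :=
  if h : A.IsHermitian then h.cfc Real.log else 0

/-- matrix logarithm taken on the support (eigenvalue `0` is sent to `0`) -/
noncomputable def mlog0 {n : Type*} [Fintype n] [DecidableEq n] (A : Matrix n n ℂ) :
    Matrix n n ℂ :=
  if h : A.IsHermitian then h.cfc (fun x => if x = 0 then 0 else Real.log x) else 0

/-- matrix exponential -/
noncomputable def mexp {n : Type*} [Fintype n] [DecidableEq n] (A : Matrix n n ℂ) :
    Matrix n n ℂ :=
  NormedSpace.exp A

/-- Frobenius (Hilbert–Schmidt) norm `‖X‖₂ = (Tr (Xᴴ X))^(1/2)` -/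
noncomputable def frob {n : Type*} [Fintype n] [DecidableEq n] (X : Matrix n n ℂ) : ℝ :=
  Real.sqrt (Matrix.trace (Xᴴ * X)).re

/-- trace norm `‖X‖₁ = Tr √(Xᴴ X)` -/
noncomputable def trNorm {n : Type*} [Fintype n] [DecidableEq n] (X : Matrix n n ℂ) : ℝ :=
  (Matrix.trace (msqrt (Xᴴ * X))).re

/-- relative entropy `S(ρ‖σ) = Tr (ρ (log ρ − log σ))` -/
noncomputable def relEnt {n : Type*} [Fintype n] [DecidableEq n]
    (rho sigma : Matrix n n ℂ) : ℝ :=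
  (Matrix.trace (rho * (mlog rho - mlog sigma))).re

/-- relative entropy with logarithms taken on the support -/
noncomputable def relEnt0 {n : Type*} [Fintype n] [DecidableEq n]
    (rho sigma : Matrix n n ℂ) : ℝ :=
  (Matrix.trace (rho * (mlog0 rho - mlog0 sigma))).re

/-- von Neumann entropy `S(τ) = −Tr (τ log τ)` -/
noncomputable def vN {n : Type*} [Fintype n] [DecidableEq n] (rho : Matrix n n ℂ) : ℝ :=
  -(Matrix.trace (rho * mlog rho)).re

section Tripartite

variable {α β γ : Type*} [Fintype α] [DecidableEq α] [Fintype β] [DecidableEq β]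
  [Fintype γ] [DecidableEq γ]

/-- partial trace over the `B` system: `ρ_AC` -/
noncomputable def ptrB (M : Matrix (α × β × γ) (α × β × γ) ℂ) : Matrix (α × γ) (α × γ) ℂ :=
  fun p q => ∑ b : β, M (p.1, b, p.2) (q.1, b, q.2)

/-- partial trace over the `A` system: `ρ_BC` -/
noncomputable def ptrA (M : Matrix (α × β × γ) (α × β × γ) ℂ) : Matrix (β × γ) (β × γ) ℂ :=
  fun p q => ∑ a : α, M (a, p.1, p.2) (a, q.1, q.2)

/-- partial trace over the `A` and `B` systems: `ρ_C` -/
noncomputable def ptrAB (M : Matrix (α × β × γ) (α × β × γ) ℂ) : Matrix γ γ ℂ :=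
  fun c c' => ∑ a : α, ∑ b : β, M (a, b, c) (a, b, c')

/-- embedding `X_AC ↦ X_AC ⊗ I_B` -/
def embAC (X : Matrix (α × γ) (α × γ) ℂ) : Matrix (α × β × γ) (α × β × γ) ℂ :=
  fun p q => if p.2.1 = q.2.1 then X (p.1, p.2.2) (q.1, q.2.2) else 0

/-- embedding `X_BC ↦ I_A ⊗ X_BC` -/
def embBC (X : Matrix (β × γ) (β × γ) ℂ) : Matrix (α × β × γ) (α × β × γ) ℂ :=
  fun p q => if p.1 = q.1 then X p.2 q.2 else 0

/-- embedding `X_C ↦ I_A ⊗ I_B ⊗ X_C` -/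
def embC (X : Matrix γ γ ℂ) : Matrix (α × β × γ) (α × β × γ) ℂ :=
  fun p q => if p.1 = q.1 ∧ p.2.1 = q.2.1 then X p.2.2 q.2.2 else 0

/-- conditional mutual information `I(A:B|C)_ρ = S(ρ_AC)+S(ρ_BC)−S(ρ_ABC)−S(ρ_C)` -/
noncomputable def cmi (rho : Matrix (α × β × γ) (α × β × γ) ℂ) : ℝ :=
  vN (ptrB rho) + vN (ptrA rho) - vN rho - vN (ptrAB rho)

/-- the operator `exp(log σ_AC + log σ_BC − log σ_C)` -/
noncomputable def sigOp (sigma : Matrix (α × β × γ) (α × β × γ) ℂ) :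
    Matrix (α × β × γ) (α × β × γ) ℂ :=
  mexp (embAC (mlog (ptrB sigma)) + embBC (mlog (ptrA sigma)) - embC (mlog (ptrAB sigma)))

/-- the operator `exp(log ρ_AC + log ρ_BC)` -/
noncomputable def sigOp2 (sigma : Matrix (α × β × γ) (α × β × γ) ℂ) :
    Matrix (α × β × γ) (α × β × γ) ℂ :=
  mexp (embAC (mlog (ptrB sigma)) + embBC (mlog (ptrA sigma)))

end Tripartite


open scoped Nat

namespace GTAux

set_option linter.unusedSectionVars false

variable {n : Type*} [Fintype n] [DecidableEq n]

set_option linter.unusedSectionVars false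
variable {n : Type*} [Fintype n] [DecidableEq n]

/-- view a matrix as a Euclidean vector -/
noncomputable def vec (M : Matrix n n ℂ) : EuclideanSpace ℂ (n × n) := WithLp.toLp 2 (fun p : n × n => M p.1 p.2)

lemma inner_vec (M N : Matrix n n ℂ) :
    (inner ℂ (vec M) (vec N) : ℂ) = Matrix.trace (Mᴴ * N) := by
  simp only [Matrix.trace, Matrix.diag, Matrix.mul_apply, Matrix.conjTranspose_apply,
    PiLp.inner_apply, vec, RCLike.inner_apply]
  rw [Fintype.sum_prod_type]
  rw [Finset.sum_comm]
  simp [mul_comm]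

lemma trace_conjTranspose_mul_self_re_nonneg (M : Matrix n n ℂ) :
    0 ≤ (Matrix.trace (Mᴴ * M)).re := by
  have h := inner_vec M M
  have h2 : 0 ≤ RCLike.re (inner ℂ (vec M) (vec M) : ℂ) := inner_self_nonneg
  rw [h] at h2
  exact h2

lemma norm_vec (M : Matrix n n ℂ) :
    ‖vec M‖ = Real.sqrt ((Matrix.trace (Mᴴ * M)).re) := by
  have h := inner_vec M M
  have : (Matrix.trace (Mᴴ * M)).re = ‖vec M‖ ^ 2 := by
    rw [← h]; exact inner_self_eq_norm_sq (𝕜 := ℂ) (vec M)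
  rw [this, Real.sqrt_sq (norm_nonneg _)]

/-- Cauchy–Schwarz for the Frobenius inner product -/
lemma cs (M N : Matrix n n ℂ) :
    ‖Matrix.trace (Mᴴ * N)‖ ≤
      Real.sqrt ((Matrix.trace (Mᴴ * M)).re) * Real.sqrt ((Matrix.trace (Nᴴ * N)).re) := by
  have h := norm_inner_le_norm (𝕜 := ℂ) (vec M) (vec N)
  rwa [inner_vec, norm_vec, norm_vec] at h

lemma trace_pow_mul_comm (P Q : Matrix n n ℂ) (K : ℕ) :
    Matrix.trace ((P * Q) ^ K) = Matrix.trace ((Q * P) ^ K) := by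
  cases K with
  | zero => rfl
  | succ K =>
    have h : ∀ J : ℕ, (P * Q) ^ J * P = P * (Q * P) ^ J := by
      intro J
      induction J with
      | zero => simp
      | succ J ih =>
        calc (P * Q) ^ (J+1) * P = (P * Q) ^ J * P * (Q * P) := by
              rw [pow_succ]; noncomm_ring
          _ = P * (Q * P) ^ (J+1) := by rw [ih, pow_succ]; noncomm_ring
    calc Matrix.trace ((P * Q) ^ (K+1)) = Matrix.trace ((P * Q) ^ K * P * Q) := by
          rw [pow_succ]; noncomm_ring
      _ = Matrix.trace (Q * ((P * Q) ^ K * P)) := by rw [Matrix.trace_mul_comm]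
      _ = Matrix.trace ((Q * P) ^ (K+1)) := by rw [h, pow_succ']; noncomm_ring

lemma re_trace_even_pow_nonneg (M : Matrix n n ℂ) (hM : M.IsHermitian) (k : ℕ) :
    0 ≤ (Matrix.trace (M ^ (2 * k))).re := by
  have h1 : M ^ (2 * k) = (M ^ k)ᴴ * M ^ k := by
    rw [conjTranspose_pow, hM.eq, ← pow_add, two_mul]
  rw [h1]
  exact trace_conjTranspose_mul_self_re_nonneg _

lemma chain : ∀ j : ℕ,
    (∀ i < j, ∀ Z : Matrix n n ℂ,
      ‖Matrix.trace (Z ^ 2 ^ (i + 1))‖ ≤ (Matrix.trace ((Zᴴ * Z) ^ 2 ^ i)).re) →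
    ∀ W U : Matrix n n ℂ, W.IsHermitian → U.IsHermitian →
      ‖Matrix.trace ((W * U) ^ 2 ^ j)‖ ≤
        Real.sqrt ((Matrix.trace (W ^ 2 ^ (j + 1))).re) *
          Real.sqrt ((Matrix.trace (U ^ 2 ^ (j + 1))).re) := by
  intro j
  induction j with
  | zero =>
    intro _ W U hW hU
    have h := cs W U
    rw [hW.eq] at h
    simpa [pow_one, pow_two, hW.eq, hU.eq] using h
  | succ j ih =>
    intro hstar W U hW hU
    have h1 : ‖Matrix.trace ((W * U) ^ 2 ^ (j + 1))‖ ≤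
        (Matrix.trace (((W * U)ᴴ * (W * U)) ^ 2 ^ j)).re :=
      hstar j (Nat.lt_succ_self j) (W * U)
    have e1 : Matrix.trace (((W * U)ᴴ * (W * U)) ^ 2 ^ j) =
        Matrix.trace (((W * W) * (U * U)) ^ 2 ^ j) := by
      rw [conjTranspose_mul, hW.eq, hU.eq]
      calc Matrix.trace ((U * W * (W * U)) ^ 2 ^ j)
          = Matrix.trace ((U * (W * (W * U))) ^ 2 ^ j) := by congr 2; noncomm_ring
        _ = Matrix.trace ((W * (W * U) * U) ^ 2 ^ j) := trace_pow_mul_comm _ _ _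
        _ = Matrix.trace (((W * W) * (U * U)) ^ 2 ^ j) := by congr 2; noncomm_ring
    have h2 : (Matrix.trace (((W * W) * (U * U)) ^ 2 ^ j)).re ≤
        ‖Matrix.trace (((W * W) * (U * U)) ^ 2 ^ j)‖ := Complex.re_le_norm _
    have hWW : (W * W).IsHermitian := by
      unfold Matrix.IsHermitian
      rw [conjTranspose_mul, hW.eq]
    have hUU : (U * U).IsHermitian := by
      unfold Matrix.IsHermitian
      rw [conjTranspose_mul, hU.eq]
    have h3 := ih (fun i hi => hstar i (hi.trans (Nat.lt_succ_self j))) (W * W) (U * U) hWW hUU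
    have e2 : ∀ V : Matrix n n ℂ, (V * V) ^ 2 ^ (j + 1) = V ^ 2 ^ (j + 2) := by
      intro V
      rw [← pow_two, ← pow_mul]
      congr 1
      rw [pow_succ 2 (j+1)]
      ring
    rw [e2, e2] at h3
    calc ‖Matrix.trace ((W * U) ^ 2 ^ (j + 1))‖
        ≤ (Matrix.trace (((W * U)ᴴ * (W * U)) ^ 2 ^ j)).re := h1
      _ = (Matrix.trace (((W * W) * (U * U)) ^ 2 ^ j)).re := by rw [e1]
      _ ≤ ‖Matrix.trace (((W * W) * (U * U)) ^ 2 ^ j)‖ := h2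
      _ ≤ _ := h3

lemma star_ineq : ∀ j : ℕ, ∀ Z : Matrix n n ℂ,
    ‖Matrix.trace (Z ^ 2 ^ (j + 1))‖ ≤ (Matrix.trace ((Zᴴ * Z) ^ 2 ^ j)).re := by
  intro j
  induction j using Nat.strong_induction_on with
  | _ j IH =>
    match j with
    | 0 =>
      intro Z
      have h := cs Zᴴ Z
      rw [conjTranspose_conjTranspose] at h
      have e1 : Matrix.trace (Z * Zᴴ) = Matrix.trace (Zᴴ * Z) := Matrix.trace_mul_comm _ _
      rw [e1] at h
      have h0 := trace_conjTranspose_mul_self_re_nonneg Z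
      rw [Real.mul_self_sqrt h0] at h
      simpa [pow_one, pow_two] using h
    | j + 1 =>
      intro Z
      have h1 : ‖Matrix.trace (Z ^ 2 ^ (j + 2))‖ =
          ‖Matrix.trace ((Z * Z) ^ 2 ^ (j + 1))‖ := by
        congr 2
        rw [← pow_two, ← pow_mul]
        congr 1
        rw [pow_succ 2 (j+1)]
        ring
      have h2 := IH j (Nat.lt_succ_self j) (Z * Z)
      have e1 : Matrix.trace (((Z * Z)ᴴ * (Z * Z)) ^ 2 ^ j) =
          Matrix.trace (((Zᴴ * Z) * (Z * Zᴴ)) ^ 2 ^ j) := by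
        rw [conjTranspose_mul]
        calc Matrix.trace ((Zᴴ * Zᴴ * (Z * Z)) ^ 2 ^ j)
            = Matrix.trace ((Zᴴ * (Zᴴ * (Z * Z))) ^ 2 ^ j) := by congr 2; noncomm_ring
          _ = Matrix.trace ((Zᴴ * (Z * Z) * Zᴴ) ^ 2 ^ j) := trace_pow_mul_comm _ _ _
          _ = Matrix.trace (((Zᴴ * Z) * (Z * Zᴴ)) ^ 2 ^ j) := by congr 2; noncomm_ring
      have h3 : (Matrix.trace (((Zᴴ * Z) * (Z * Zᴴ)) ^ 2 ^ j)).re ≤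
          ‖Matrix.trace (((Zᴴ * Z) * (Z * Zᴴ)) ^ 2 ^ j)‖ := Complex.re_le_norm _
      have h4 := chain j (fun i hi => IH i (hi.trans (Nat.lt_succ_self j)))
        (Zᴴ * Z) (Z * Zᴴ) (Matrix.isHermitian_conjTranspose_mul_self Z) (Matrix.isHermitian_mul_conjTranspose_self Z)
      have e2 : Matrix.trace ((Z * Zᴴ) ^ 2 ^ (j + 1)) = Matrix.trace ((Zᴴ * Z) ^ 2 ^ (j + 1)) :=
        trace_pow_mul_comm _ _ _
      rw [e2] at h4
      have h0 : 0 ≤ (Matrix.trace ((Zᴴ * Z) ^ 2 ^ (j + 1))).re := by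
        have := re_trace_even_pow_nonneg (Zᴴ * Z) (Matrix.isHermitian_conjTranspose_mul_self Z) (2 ^ j)
        rwa [show 2 * 2 ^ j = 2 ^ (j + 1) by rw [pow_succ]; ring] at this
      rw [Real.mul_self_sqrt h0] at h4
      show ‖Matrix.trace (Z ^ 2 ^ (j + 2))‖ ≤ (Matrix.trace ((Zᴴ * Z) ^ 2 ^ (j + 1))).re
      rw [h1]
      exact h2.trans (((congrArg Complex.re e1).le).trans (h3.trans h4))

lemma gold : ∀ m : ℕ, ∀ A B : Matrix n n ℂ, A.IsHermitian → B.IsHermitian →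
    ‖Matrix.trace ((A * B) ^ 2 ^ (m + 1))‖ ≤
      (Matrix.trace (A ^ 2 ^ (m + 1) * B ^ 2 ^ (m + 1))).re := by
  intro m
  induction m with
  | zero =>
    intro A B hA hB
    have h := star_ineq 0 (A * B)
    have e1 : Matrix.trace (((A * B)ᴴ * (A * B)) ^ 2 ^ 0) =
        Matrix.trace (A ^ 2 ^ 1 * B ^ 2 ^ 1) := by
      rw [conjTranspose_mul, hA.eq, hB.eq, pow_zero, pow_one]
      calc Matrix.trace (B * A * (A * B)) = Matrix.trace (B * (A * (A * B))) := by noncomm_ring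
        _ = Matrix.trace (A * (A * B) * B) := Matrix.trace_mul_comm _ _
        _ = Matrix.trace (A ^ 2 ^ 1 * B ^ 2 ^ 1) := by
              congr 1
              rw [pow_one, pow_two, pow_two]
              noncomm_ring
    rw [e1] at h
    exact h
  | succ m ih =>
    intro A B hA hB
    have h := star_ineq (m + 1) (A * B)
    have e1 : Matrix.trace (((A * B)ᴴ * (A * B)) ^ 2 ^ (m + 1)) =
        Matrix.trace (((A * A) * (B * B)) ^ 2 ^ (m + 1)) := by
      rw [conjTranspose_mul, hA.eq, hB.eq]
      calc Matrix.trace ((B * A * (A * B)) ^ 2 ^ (m + 1))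
          = Matrix.trace ((B * (A * (A * B))) ^ 2 ^ (m + 1)) := by congr 2; noncomm_ring
        _ = Matrix.trace ((A * (A * B) * B) ^ 2 ^ (m + 1)) := trace_pow_mul_comm _ _ _
        _ = Matrix.trace (((A * A) * (B * B)) ^ 2 ^ (m + 1)) := by congr 2; noncomm_ring
    rw [e1] at h
    have hAA : (A * A).IsHermitian := by
      unfold Matrix.IsHermitian; rw [conjTranspose_mul, hA.eq]
    have hBB : (B * B).IsHermitian := by
      unfold Matrix.IsHermitian; rw [conjTranspose_mul, hB.eq]
    have h2 := ih (A * A) (B * B) hAA hBB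
    have e2 : ∀ V : Matrix n n ℂ, (V * V) ^ 2 ^ (m + 1) = V ^ 2 ^ (m + 2) := by
      intro V
      rw [← pow_two, ← pow_mul]
      congr 1
      rw [pow_succ 2 (m+1)]
      ring
    rw [e2, e2] at h2
    exact h.trans ((Complex.re_le_norm _).trans h2)


section BanachAlg

variable {𝔸 : Type*} [NormedRing 𝔸] [NormedAlgebra ℂ 𝔸] [CompleteSpace 𝔸] [NormOneClass 𝔸]

set_option maxHeartbeats 1600000 in
lemma exp_tail_bound (k : ℕ) (x : 𝔸) :
    ‖NormedSpace.exp x - ∑ i ∈ Finset.range k, (i !⁻¹ : ℂ) • x ^ i‖ ≤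
      Real.exp ‖x‖ - ∑ i ∈ Finset.range k, ‖x‖ ^ i / (i ! : ℝ) := by
  have hs : Summable (fun i : ℕ => (i !⁻¹ : ℂ) • x ^ i) := NormedSpace.expSeries_summable' x
  have hns : Summable (fun i : ℕ => ‖(i !⁻¹ : ℂ) • x ^ i‖) := NormedSpace.norm_expSeries_summable' x
  have hr : Summable (fun i : ℕ => ‖x‖ ^ i / (i ! : ℝ)) := Real.summable_pow_div_factorial _
  have hsplit : NormedSpace.exp x - ∑ i ∈ Finset.range k, (i !⁻¹ : ℂ) • x ^ i
      = ∑' i : ℕ, ((i + k)!⁻¹ : ℂ) • x ^ (i + k) := by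
    simp only [NormedSpace.exp_eq_tsum ℂ]
    rw [← hs.sum_add_tsum_nat_add k, add_sub_cancel_left]
  have hrsplit : Real.exp ‖x‖ - ∑ i ∈ Finset.range k, ‖x‖ ^ i / (i ! : ℝ)
      = ∑' i : ℕ, ‖x‖ ^ (i + k) / ((i + k)! : ℝ) := by
    rw [Real.exp_eq_exp_ℝ]
    simp only [NormedSpace.exp_eq_tsum_div]
    rw [← hr.sum_add_tsum_nat_add k, add_sub_cancel_left]
  rw [hsplit, hrsplit]
  have hterm : ∀ i : ℕ, ‖((i + k)!⁻¹ : ℂ) • x ^ (i + k)‖ ≤ ‖x‖ ^ (i + k) / ((i + k)! : ℝ) := by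
    intro i
    rw [norm_smul]
    have h1 : ‖((i + k)!⁻¹ : ℂ)‖ = ((i + k)! : ℝ)⁻¹ := by
      rw [norm_inv]
      norm_num
    rw [h1, div_eq_inv_mul]
    exact mul_le_mul_of_nonneg_left (norm_pow_le x (i + k)) (by positivity)
  calc ‖∑' i : ℕ, ((i + k)!⁻¹ : ℂ) • x ^ (i + k)‖
      ≤ ∑' i : ℕ, ‖((i + k)!⁻¹ : ℂ) • x ^ (i + k)‖ :=
        norm_tsum_le_tsum_norm ((summable_nat_add_iff k).mpr hns)
    _ ≤ ∑' i : ℕ, ‖x‖ ^ (i + k) / ((i + k)! : ℝ) :=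
        Summable.tsum_le_tsum hterm ((summable_nat_add_iff k).mpr hns) ((summable_nat_add_iff k).mpr hr)

lemma norm_exp_le (x : 𝔸) : ‖NormedSpace.exp x‖ ≤ Real.exp ‖x‖ := by
  have h := exp_tail_bound 0 x
  simpa using h

lemma exp_tail1 (x : 𝔸) : ‖NormedSpace.exp x - 1‖ ≤ Real.exp ‖x‖ - 1 := by
  have h := exp_tail_bound 1 x
  simpa using h

lemma exp_tail2 (x : 𝔸) :
    ‖NormedSpace.exp x - (1 + x)‖ ≤ Real.exp ‖x‖ - (1 + ‖x‖) := by
  have h := exp_tail_bound 2 x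
  simpa [Finset.sum_range_succ, add_sub_cancel_left] using h

lemma trotter_diff (x y : 𝔸) :
    ‖NormedSpace.exp x * NormedSpace.exp y - NormedSpace.exp (x + y)‖ ≤
      2 * (Real.exp (‖x‖ + ‖y‖) - 1 - (‖x‖ + ‖y‖)) := by
  set a := ‖x‖ with ha
  set b := ‖y‖ with hb
  have key : NormedSpace.exp x * NormedSpace.exp y - NormedSpace.exp (x + y) =
      (NormedSpace.exp x - (1 + x)) * NormedSpace.exp y + x * (NormedSpace.exp y - 1) +
        (NormedSpace.exp y - (1 + y)) - (NormedSpace.exp (x + y) - (1 + (x + y))) := by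
    noncomm_ring
  have h1 : ‖(NormedSpace.exp x - (1 + x)) * NormedSpace.exp y‖ ≤
      (Real.exp a - (1 + a)) * Real.exp b := by
    refine (norm_mul_le _ _).trans ?_
    have e1 := exp_tail2 x
    have e2 := norm_exp_le y
    have h0 : (0:ℝ) ≤ Real.exp a - (1 + a) := by
      have := Real.add_one_le_exp a; linarith
    exact mul_le_mul e1 e2 (norm_nonneg _) h0
  have h2 : ‖x * (NormedSpace.exp y - 1)‖ ≤ a * (Real.exp b - 1) := by
    refine (norm_mul_le _ _).trans ?_
    have e1 := exp_tail1 y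
    have h0 : (0:ℝ) ≤ a := norm_nonneg _
    exact mul_le_mul le_rfl e1 (norm_nonneg _) h0
  have h3 := exp_tail2 y
  have h4 : ‖NormedSpace.exp (x + y) - (1 + (x + y))‖ ≤ Real.exp (a + b) - (1 + (a + b)) := by
    refine (exp_tail2 (x + y)).trans ?_
    have hab : ‖x + y‖ ≤ a + b := norm_add_le x y
    have hm : Real.exp ‖x + y‖ ≤ Real.exp (a + b) := Real.exp_le_exp.mpr hab
    have hd : 0 ≤ a + b - ‖x + y‖ := by linarith
    have hfac : Real.exp (a + b) = Real.exp ‖x + y‖ * Real.exp (a + b - ‖x + y‖) := by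
      rw [← Real.exp_add]; ring_nf
    have q1 : 0 ≤ Real.exp ‖x + y‖ * (Real.exp (a + b - ‖x + y‖) - 1 - (a + b - ‖x + y‖)) :=
      mul_nonneg (Real.exp_pos _).le (by nlinarith [Real.add_one_le_exp (a + b - ‖x + y‖)])
    have q2 : 0 ≤ (Real.exp ‖x + y‖ - 1) * (a + b - ‖x + y‖) :=
      mul_nonneg (by nlinarith [Real.one_le_exp (norm_nonneg (x + y))]) hd
    nlinarith [hfac, q1, q2]
  calc ‖NormedSpace.exp x * NormedSpace.exp y - NormedSpace.exp (x + y)‖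
      = ‖(NormedSpace.exp x - (1 + x)) * NormedSpace.exp y + x * (NormedSpace.exp y - 1) +
          (NormedSpace.exp y - (1 + y)) - (NormedSpace.exp (x + y) - (1 + (x + y)))‖ := by
        rw [key]
    _ ≤ ‖(NormedSpace.exp x - (1 + x)) * NormedSpace.exp y + x * (NormedSpace.exp y - 1) +
          (NormedSpace.exp y - (1 + y))‖ + ‖NormedSpace.exp (x + y) - (1 + (x + y))‖ :=
        norm_sub_le _ _
    _ ≤ (‖(NormedSpace.exp x - (1 + x)) * NormedSpace.exp y‖ +
          ‖x * (NormedSpace.exp y - 1)‖ + ‖NormedSpace.exp y - (1 + y)‖) +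
          ‖NormedSpace.exp (x + y) - (1 + (x + y))‖ := by
        exact add_le_add (norm_add₃_le) le_rfl
    _ ≤ ((Real.exp a - (1 + a)) * Real.exp b + a * (Real.exp b - 1) + (Real.exp b - (1 + b))) +
          (Real.exp (a + b) - (1 + (a + b))) :=
        add_le_add (add_le_add (add_le_add h1 h2) h3) h4
    _ = 2 * (Real.exp (a + b) - 1 - (a + b)) := by
        rw [Real.exp_add]; ring

lemma pow_diff_bound (u v : 𝔸) (R : ℝ) (hR : 1 ≤ R) (hu : ‖u‖ ≤ R) (hv : ‖v‖ ≤ R) :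
    ∀ k : ℕ, ‖u ^ k - v ^ k‖ ≤ k * R ^ k * ‖u - v‖ := by
  intro k
  induction k with
  | zero => simp
  | succ k ih =>
    have key : u ^ (k + 1) - v ^ (k + 1) = u ^ k * (u - v) + (u ^ k - v ^ k) * v := by
      noncomm_ring
    have hR0 : (0:ℝ) ≤ R := le_trans zero_le_one hR
    have hpk : ‖u ^ k‖ ≤ R ^ k :=
      (norm_pow_le u k).trans (pow_le_pow_left₀ (norm_nonneg _) hu k)
    have h1 : ‖u ^ k * (u - v)‖ ≤ R ^ k * ‖u - v‖ :=
      (norm_mul_le _ _).trans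
        (mul_le_mul hpk le_rfl (norm_nonneg _) (pow_nonneg hR0 k))
    have h2 : ‖(u ^ k - v ^ k) * v‖ ≤ (k * R ^ k * ‖u - v‖) * R :=
      (norm_mul_le _ _).trans (mul_le_mul ih hv (norm_nonneg _) (by positivity))
    have h3 : R ^ k * ‖u - v‖ ≤ R ^ (k + 1) * ‖u - v‖ :=
      mul_le_mul_of_nonneg_right (pow_le_pow_right₀ hR (Nat.le_succ k)) (norm_nonneg _)
    calc ‖u ^ (k + 1) - v ^ (k + 1)‖ ≤ ‖u ^ k * (u - v)‖ + ‖(u ^ k - v ^ k) * v‖ := by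
          rw [key]; exact norm_add_le _ _
      _ ≤ R ^ k * ‖u - v‖ + (k * R ^ k * ‖u - v‖) * R := add_le_add h1 h2
      _ ≤ R ^ (k + 1) * ‖u - v‖ + (k : ℝ) * R ^ (k + 1) * ‖u - v‖ := by
          have h4 : ((k : ℝ) * R ^ k * ‖u - v‖) * R = (k : ℝ) * R ^ (k + 1) * ‖u - v‖ := by ring
          rw [h4]
          exact add_le_add h3 le_rfl
      _ = ((k : ℕ) + 1 : ℝ) * R ^ (k + 1) * ‖u - v‖ := by ring
      _ = ((k + 1 : ℕ) : ℝ) * R ^ (k + 1) * ‖u - v‖ := by push_cast; ring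

end BanachAlg

end GTAux

set_option maxHeartbeats 2000000

theorem golden_thompson {n : Type*} [Fintype n] [DecidableEq n]
    (X Y : Matrix n n ℂ) (hX : X.IsHermitian) (hY : Y.IsHermitian) :
    (Matrix.trace (mexp (X + Y))).re ≤ (Matrix.trace (mexp X * mexp Y)).re := by
  rcases isEmpty_or_nonempty n with hn | hn
  · simp [Matrix.trace]
  letI : SeminormedRing (Matrix n n ℂ) := Matrix.linftyOpSemiNormedRing
  letI : NormedRing (Matrix n n ℂ) := Matrix.linftyOpNormedRing
  letI : NormedAlgebra ℂ (Matrix n n ℂ) := Matrix.linftyOpNormedAlgebra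
  haveI : NormOneClass (Matrix n n ℂ) := Matrix.linfty_opNormOneClass
  -- trace bound
  have htr : ∀ M : Matrix n n ℂ, |(Matrix.trace M).re| ≤ (Fintype.card n : ℝ) * ‖M‖ := by
    intro M
    have hentry : ∀ i : n, ‖M i i‖ ≤ ‖M‖ := by
      intro i
      have h1 : ‖M i i‖ ≤ ∑ j : n, ‖M i j‖ :=
        Finset.single_le_sum (fun j _ => norm_nonneg (M i j)) (Finset.mem_univ i)
      have h2 : ∑ j : n, ‖M i j‖ ≤ ‖M‖ := by
        have h3 : (∑ j : n, ‖M i j‖₊ : NNReal) ≤ ‖M‖₊ := by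
          rw [Matrix.linfty_opNNNorm_def]
          exact Finset.le_sup (f := fun i : n => ∑ j : n, ‖M i j‖₊) (Finset.mem_univ i)
        have h4 := NNReal.coe_le_coe.mpr h3
        simpa [NNReal.coe_sum] using h4
      exact h1.trans h2
    calc |(Matrix.trace M).re| ≤ ‖Matrix.trace M‖ := Complex.abs_re_le_norm _
      _ ≤ ∑ i : n, ‖M i i‖ := by
          rw [Matrix.trace]
          exact norm_sum_le _ _
      _ ≤ ∑ _i : n, ‖M‖ := by
          refine Finset.sum_le_sum fun i _ => ?_
          exact hentry i
      _ = (Fintype.card n : ℝ) * ‖M‖ := by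
          rw [Finset.sum_const, Finset.card_univ, nsmul_eq_mul]
  set t : ℝ := ‖X‖ + ‖Y‖ with ht
  have ht0 : 0 ≤ t := by positivity
  refine le_of_forall_pos_le_add fun ε hε => ?_
  set C : ℝ := (Fintype.card n : ℝ) * (2 * Real.exp t * t ^ 2) + 1 with hC
  have hC1 : 1 ≤ C := by
    have : 0 ≤ (Fintype.card n : ℝ) * (2 * Real.exp t * t ^ 2) := by positivity
    linarith
  set m : ℕ := ⌈max t (C / ε)⌉₊ with hm
  set k : ℕ := 2 ^ (m + 1) with hk
  have hkm : (m : ℝ) ≤ (k : ℝ) := by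
    have h1 : m ≤ k := le_of_lt (lt_of_lt_of_le (Nat.lt_two_pow_self (n := m)) (Nat.pow_le_pow_right (by norm_num) (Nat.le_succ m)))
    exact_mod_cast h1
  have hmax : max t (C / ε) ≤ (k : ℝ) := le_trans (Nat.le_ceil _) hkm
  have hk1 : (1 : ℝ) ≤ (k : ℝ) := by
    have : 1 ≤ k := Nat.one_le_two_pow
    exact_mod_cast this
  have hk0 : (0 : ℝ) < (k : ℝ) := lt_of_lt_of_le zero_lt_one hk1
  have hkpos : 0 < k := pow_pos (by norm_num) (m + 1)
  have hkc : ((k : ℕ) : ℂ) ≠ 0 := Nat.cast_ne_zero.mpr hkpos.ne'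
  set a : Matrix n n ℂ := ((k : ℕ) : ℂ)⁻¹ • X with ha
  set b : Matrix n n ℂ := ((k : ℕ) : ℂ)⁻¹ • Y with hb
  have haH : a.IsHermitian := by
    unfold Matrix.IsHermitian
    rw [ha, Matrix.conjTranspose_smul, hX.eq]
    congr 1
    simp
  have hbH : b.IsHermitian := by
    unfold Matrix.IsHermitian
    rw [hb, Matrix.conjTranspose_smul, hY.eq]
    congr 1
    simp
  have hsm : ∀ V : Matrix n n ℂ, (k : ℕ) • (((k : ℕ) : ℂ)⁻¹ • V) = V := by
    intro V
    rw [← Nat.cast_smul_eq_nsmul ℂ, smul_smul, mul_inv_cancel₀ hkc, one_smul]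
  have hApow : mexp a ^ k = mexp X := by
    have h := Matrix.exp_nsmul k a
    rw [hsm X] at h
    exact h.symm
  have hBpow : mexp b ^ k = mexp Y := by
    have h := Matrix.exp_nsmul k b
    rw [hsm Y] at h
    exact h.symm
  have hSpow : mexp (a + b) ^ k = mexp (X + Y) := by
    have hab : a + b = ((k : ℕ) : ℂ)⁻¹ • (X + Y) := by rw [ha, hb, smul_add]
    have h := Matrix.exp_nsmul k (a + b)
    rw [hab, hsm (X + Y)] at h
    rw [hab]
    exact h.symm
  -- per-step trace inequality
  have key1 : (Matrix.trace ((mexp a * mexp b) ^ k)).re ≤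
      (Matrix.trace (mexp X * mexp Y)).re := by
    have g := GTAux.gold m (mexp a) (mexp b) (Matrix.IsHermitian.exp haH)
      (Matrix.IsHermitian.exp hbH)
    rw [← hk] at g
    rw [hApow, hBpow] at g
    exact (Complex.re_le_norm _).trans g
  -- norms
  have hna : ‖a‖ = ‖X‖ / (k : ℝ) := by
    rw [ha, norm_smul, norm_inv, Complex.norm_natCast, div_eq_inv_mul]
  have hnb : ‖b‖ = ‖Y‖ / (k : ℝ) := by
    rw [hb, norm_smul, norm_inv, Complex.norm_natCast, div_eq_inv_mul]
  have hab : ‖a‖ + ‖b‖ = t / (k : ℝ) := by rw [hna, hnb, ht, add_div]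
  have hexp_a : ‖mexp a‖ ≤ Real.exp ‖a‖ := GTAux.norm_exp_le a
  have hexp_b : ‖mexp b‖ ≤ Real.exp ‖b‖ := GTAux.norm_exp_le b
  have hub : ‖mexp a * mexp b‖ ≤ Real.exp (t / (k : ℝ)) := by
    calc ‖mexp a * mexp b‖ ≤ ‖mexp a‖ * ‖mexp b‖ := norm_mul_le _ _
      _ ≤ Real.exp ‖a‖ * Real.exp ‖b‖ :=
          mul_le_mul hexp_a hexp_b (norm_nonneg _) (Real.exp_pos _).le
      _ = Real.exp (‖a‖ + ‖b‖) := (Real.exp_add _ _).symm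
      _ = Real.exp (t / (k : ℝ)) := by rw [hab]
  have hvb : ‖mexp (a + b)‖ ≤ Real.exp (t / (k : ℝ)) := by
    refine (GTAux.norm_exp_le (a + b)).trans ?_
    refine Real.exp_le_exp.mpr ?_
    calc ‖a + b‖ ≤ ‖a‖ + ‖b‖ := norm_add_le _ _
      _ = t / (k : ℝ) := hab
  have hdiff : ‖mexp a * mexp b - mexp (a + b)‖ ≤
      2 * (Real.exp (t / (k : ℝ)) - 1 - t / (k : ℝ)) := by
    have h := GTAux.trotter_diff a b
    rw [hab] at h
    exact h
  have hone : (1 : ℝ) ≤ Real.exp (t / (k : ℝ)) := Real.one_le_exp (by positivity)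
  have hpow := GTAux.pow_diff_bound (mexp a * mexp b) (mexp (a + b))
    (Real.exp (t / (k : ℝ))) hone hub hvb k
  have hRk : Real.exp (t / (k : ℝ)) ^ k = Real.exp t := by
    rw [← Real.exp_nat_mul]
    congr 1
    field_simp
  -- small-x bound on exp
  have htk0 : 0 ≤ t / (k : ℝ) := by positivity
  have htk1 : t / (k : ℝ) ≤ 1 := by
    rw [div_le_one hk0]
    exact le_trans (le_max_left _ _) hmax
  have hq : Real.exp (t / (k : ℝ)) - 1 - t / (k : ℝ) ≤ (t / (k : ℝ)) ^ 2 := by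
    have habs : |t / (k : ℝ)| ≤ 1 := by rw [abs_of_nonneg htk0]; exact htk1
    have h := Real.exp_bound habs (by norm_num : 0 < 2)
    have h2 : ∑ i ∈ Finset.range 2, (t / (k : ℝ)) ^ i / i ! = 1 + t / (k : ℝ) := by
      simp [Finset.sum_range_succ]
    rw [h2] at h
    have h3 := abs_le.mp h |>.2
    have h4 : |t / (k : ℝ)| ^ 2 * ((2 : ℕ).succ / ((2 : ℕ)! * 2) : ℝ) ≤ (t / (k : ℝ)) ^ 2 := by
      rw [abs_of_nonneg htk0]
      have : ((2 : ℕ).succ / ((2 : ℕ)! * 2) : ℝ) = 3 / 4 := by norm_num [Nat.factorial]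
      rw [this]
      nlinarith [sq_nonneg (t / (k : ℝ))]
    linarith
  -- total error
  have herr : ‖(mexp a * mexp b) ^ k - mexp (X + Y)‖ ≤ 2 * Real.exp t * t ^ 2 / (k : ℝ) := by
    rw [← hSpow]
    refine hpow.trans ?_
    rw [hRk]
    calc (k : ℝ) * Real.exp t * ‖mexp a * mexp b - mexp (a + b)‖
        ≤ (k : ℝ) * Real.exp t * (2 * (Real.exp (t / (k : ℝ)) - 1 - t / (k : ℝ))) := by
          refine mul_le_mul_of_nonneg_left hdiff ?_
          positivity
      _ ≤ (k : ℝ) * Real.exp t * (2 * (t / (k : ℝ)) ^ 2) := by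
          refine mul_le_mul_of_nonneg_left (by linarith) ?_
          positivity
      _ = 2 * Real.exp t * t ^ 2 / (k : ℝ) := by
          field_simp
  -- conclude
  have hfin : (Matrix.trace (mexp (X + Y))).re ≤
      (Matrix.trace ((mexp a * mexp b) ^ k)).re + (Fintype.card n : ℝ) *
        (2 * Real.exp t * t ^ 2 / (k : ℝ)) := by
    have h1 := htr ((mexp a * mexp b) ^ k - mexp (X + Y))
    rw [Matrix.trace_sub, Complex.sub_re] at h1
    have h2 : (Fintype.card n : ℝ) * ‖(mexp a * mexp b) ^ k - mexp (X + Y)‖ ≤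
        (Fintype.card n : ℝ) * (2 * Real.exp t * t ^ 2 / (k : ℝ)) := by
      refine mul_le_mul_of_nonneg_left herr ?_
      positivity
    have h3 := abs_le.mp h1 |>.1
    linarith
  have hfinal : (Fintype.card n : ℝ) * (2 * Real.exp t * t ^ 2 / (k : ℝ)) ≤ ε := by
    have hCk : C / ε ≤ (k : ℝ) := le_trans (le_max_right _ _) hmax
    have hC0 : 0 < C := lt_of_lt_of_le zero_lt_one hC1
    have h1 : C ≤ ε * (k : ℝ) := by
      rw [div_le_iff₀ hε] at hCk
      linarith [hCk]
    have h2 : (Fintype.card n : ℝ) * (2 * Real.exp t * t ^ 2) ≤ C := by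
      rw [hC]; linarith
    rw [mul_div_assoc'] at *
    rw [div_le_iff₀ hk0]
    calc (Fintype.card n : ℝ) * (2 * Real.exp t * t ^ 2) ≤ C := h2
      _ ≤ ε * (k : ℝ) := h1
  linarith [key1, hfin, hfinal]
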